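/- Triviality of Stanley's g-weights for simple polytopes: if P is simple, then g̃_Q(t) = 1 for every nonempty face Q of P. -/

import Mathlib

open Pointwise

noncomputable section

/-- A point of `ℝⁿ` is a lattice point if all of its coordinates are integers. -/
def IsLatticePt {n : ℕ} (x : Fin n → ℝ) : Prop := ∀ i, ∃ m : ℤ, x i = (m : ℝ)

/-- The number of lattice points of a subset `S ⊂ ℝⁿ` (i.e. `|S ∩ M|` for `M = ℤⁿ`). -/
def latticeCount {n : ℕ} (S : Set (Fin n → ℝ)) : ℕ := {x ∈ S | IsLatticePt x}.ncard

/-- `P` is a full-dimensional lattice polytope in `ℝⁿ`: the convex hull of a finite set of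
lattice points whose affine span is all of `ℝⁿ`. -/
def IsFullLatticePolytope (n : ℕ) (P : Set (Fin n → ℝ)) : Prop :=
  ∃ V : Finset (Fin n → ℝ), (∀ v ∈ V, IsLatticePt v) ∧
    P = convexHull ℝ (V : Set (Fin n → ℝ)) ∧ affineSpan ℝ P = ⊤

/-- `Q` is a face of `P`: either `P` itself, or an exposed face
`{x ∈ P : φ(x) = max_P φ}` for a linear functional `φ`. -/
def IsFace {n : ℕ} (P Q : Set (Fin n → ℝ)) : Prop :=
  Q = P ∨ ∃ φ : (Fin n → ℝ) →ₗ[ℝ] ℝ, Q = {x | x ∈ P ∧ ∀ z ∈ P, φ z ≤ φ x}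

/-- The collection of nonempty faces of `P`. -/
def faces {n : ℕ} (P : Set (Fin n → ℝ)) : Set (Set (Fin n → ℝ)) :=
  {Q | IsFace P Q ∧ Q.Nonempty}

/-- The dimension of (the affine span of) a subset of `ℝⁿ`. -/
def pdim {n : ℕ} (Q : Set (Fin n → ℝ)) : ℕ :=
  Module.finrank ℝ (affineSpan ℝ Q).direction

/-- Stanley's g-weights `g̃_Q(t) ∈ ℤ[t]`, characterized by downward recursion on `dim Q`:
`g̃_P = 1`, and for a proper nonempty face `Q`, writing
`h̃_Q(t) = Σ_{R : Q ⪇ R ⪯ P} g̃_R(t)·(t−1)^{dim R − dim Q − 1}` (a polynomial of degree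
`d = n − 1 − dim Q`), one has `g̃_Q(t) = h₀ + Σ_{i=1}^{⌊d/2⌋} (h_i − h_{i−1}) tⁱ`
where `h_i` are the coefficients of `h̃_Q`. -/
def gRecursion (n : ℕ) (P : Set (Fin n → ℝ)) (g : Set (Fin n → ℝ) → Polynomial ℤ) : Prop :=
  g P = 1 ∧
  ∀ Q ∈ faces P, Q ≠ P →
    g Q =
      (fun h : Polynomial ℤ =>
        Polynomial.C (h.coeff 0) +
          ∑ i ∈ Finset.Icc 1 ((n - 1 - pdim Q) / 2),
            Polynomial.C (h.coeff i - h.coeff (i - 1)) * Polynomial.X ^ i)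
      (∑ᶠ R ∈ {R | IsFace P R ∧ Q ⊂ R},
        g R * (Polynomial.X - 1) ^ (pdim R - pdim Q - 1))

/-- `P` is a simple polytope: every vertex (face of dimension `0`) is contained in exactly
`n` facets (faces of dimension `n−1`). -/
def IsSimple (n : ℕ) (P : Set (Fin n → ℝ)) : Prop :=
  ∀ Q ∈ faces P, pdim Q = 0 →
    {F | F ∈ faces P ∧ pdim F = n - 1 ∧ Q ⊆ F}.ncard = n

namespace GWT

open Finset Module

abbrev E (n : ℕ) := Fin n → ℝ
abbrev Lam (n : ℕ) := (Fin n → ℝ) →ₗ[ℝ] ℝ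

variable {n : ℕ}

open scoped Classical in
/-- the set of maximizers of `ψ` within `W` -/
def ramax (W : Finset (E n)) (ψ : Lam n) : Finset (E n) :=
  W.filter (fun v => ∀ w ∈ W, ψ w ≤ ψ v)

lemma mem_ramax {W : Finset (E n)} {ψ : Lam n} {v : E n} :
    v ∈ ramax W ψ ↔ v ∈ W ∧ ∀ w ∈ W, ψ w ≤ ψ v := by
  simp [ramax]

lemma ramax_subset {W : Finset (E n)} {ψ : Lam n} : ramax W ψ ⊆ W :=
  fun _ h => (mem_ramax.1 h).1

lemma ramax_nonempty {W : Finset (E n)} (hW : W.Nonempty) (ψ : Lam n) :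
    (ramax W ψ).Nonempty := by
  obtain ⟨b, hb, hmax⟩ := W.exists_max_image ψ hW
  exact ⟨b, mem_ramax.2 ⟨hb, hmax⟩⟩

lemma ramax_zero (W : Finset (E n)) : ramax W 0 = W := by
  ext v; simp [mem_ramax]

/-- `B` is the vertex set of an exposed face of `conv V` -/
def Expo (V B : Finset (E n)) : Prop := ∃ φ : Lam n, B = ramax V φ

lemma expo_self (V : Finset (E n)) : Expo V V := ⟨0, (ramax_zero V).symm⟩

lemma expo_subset {V B : Finset (E n)} (h : Expo V B) : B ⊆ V := by
  obtain ⟨φ, rfl⟩ := h; exact ramax_subset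

lemma expo_nonempty {V B : Finset (E n)} (hV : V.Nonempty) (h : Expo V B) : B.Nonempty := by
  obtain ⟨φ, rfl⟩ := h; exact ramax_nonempty hV φ

lemma hull_le {W : Finset (E n)} {ψ : Lam n} {c : ℝ} (hc : ∀ w ∈ W, ψ w ≤ c)
    {x : E n} (hx : x ∈ convexHull ℝ (W : Set (E n))) : ψ x ≤ c := by
  have : convexHull ℝ (W : Set (E n)) ⊆ {y | ψ y ≤ c} :=
    convexHull_min (fun w hw => hc w hw) (convex_halfSpace_le ψ.isLinear c)
  exact this hx

lemma hull_ge {W : Finset (E n)} {ψ : Lam n} {c : ℝ} (hc : ∀ w ∈ W, c ≤ ψ w)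
    {x : E n} (hx : x ∈ convexHull ℝ (W : Set (E n))) : c ≤ ψ x := by
  have : convexHull ℝ (W : Set (E n)) ⊆ {y | c ≤ ψ y} :=
    convexHull_min (fun w hw => hc w hw) (convex_halfSpace_ge ψ.isLinear c)
  exact this hx

/-- dimension of (the hull of) a finite set -/
def fdim (B : Finset (E n)) : ℕ := Module.finrank ℝ (vectorSpan ℝ (B : Set (E n)))

lemma pdim_hull (B : Finset (E n)) : pdim (convexHull ℝ (B : Set (E n))) = fdim B := by
  unfold pdim fdim
  rw [affineSpan_convexHull, direction_affineSpan]

section V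

variable {V : Finset (E n)}

lemma face_eq_hull (hV : V.Nonempty) (φ : Lam n) :
    {x | x ∈ convexHull ℝ (V : Set (E n)) ∧
        ∀ z ∈ convexHull ℝ (V : Set (E n)), φ z ≤ φ x} =
      convexHull ℝ ((ramax V φ : Finset (E n)) : Set (E n)) := by
  obtain ⟨b, hb⟩ := ramax_nonempty hV φ
  obtain ⟨hbV, hbmax⟩ := mem_ramax.1 hb
  apply Set.Subset.antisymm
  · rintro x ⟨hxP, hxmax⟩
    have hxb : φ x = φ b := by
      have h1 : φ x ≤ φ b := hull_le hbmax hxP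
      have h2 : φ b ≤ φ x := hxmax b (subset_convexHull ℝ _ hbV)
      linarith
    rw [Finset.convexHull_eq] at hxP
    obtain ⟨w, hw0, hw1, hwx⟩ := hxP
    have hzero : ∀ y ∈ V, y ∉ ramax V φ → w y = 0 := by
      intro y hyV hyn
      by_contra hwy
      have hwy' : 0 < w y := lt_of_le_of_ne (hw0 y hyV) (Ne.symm hwy)
      have hyb : φ y < φ b := by
        rcases lt_or_eq_of_le (hbmax y hyV) with h | h
        · exact h
        · exact absurd (mem_ramax.2 ⟨hyV, fun u hu => h ▸ hbmax u hu⟩) hyn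
      have hφx : φ x = ∑ v ∈ V, w v * φ v := by
        rw [← hwx, Finset.centerMass_eq_of_sum_1 _ _ hw1]
        simp only [map_sum, map_smul, smul_eq_mul, id]
      have hlt : ∑ v ∈ V, w v * φ v < ∑ v ∈ V, w v * φ b := by
        apply Finset.sum_lt_sum
        · intro v hv
          exact mul_le_mul_of_nonneg_left (hbmax v hv) (hw0 v hv)
        · exact ⟨y, hyV, by nlinarith⟩
      rw [← Finset.sum_mul, hw1, one_mul] at hlt
      rw [hφx] at hxb
      linarith
    have hsum : ∑ y ∈ ramax V φ, w y = 1 := by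
      rw [← hw1]
      exact Finset.sum_subset ramax_subset (fun y hy hyn => hzero y hy hyn)
    have hcm : (ramax V φ).centerMass w id = x := by
      rw [Finset.centerMass_subset id ramax_subset (fun y hy hyn => hzero y hy hyn)]
      exact hwx
    rw [← hcm]
    exact Finset.centerMass_mem_convexHull _ (fun y hy => hw0 y (ramax_subset hy))
      (by rw [hsum]; norm_num) (fun y hy => Finset.mem_coe.2 hy)
  · intro x hx
    have hxP : x ∈ convexHull ℝ (V : Set (E n)) :=
      convexHull_mono (Finset.coe_subset.2 ramax_subset) hx
    refine ⟨hxP, fun z hz => ?_⟩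
    have h1 : φ z ≤ φ b := hull_le hbmax hz
    have h2 : φ b ≤ φ x := hull_ge (fun u hu => (mem_ramax.1 hu).2 b hbV) hx
    linarith

lemma mem_hull_iff {B : Finset (E n)} (hV : V.Nonempty) (hB : Expo V B) {v : E n}
    (hv : v ∈ V) : v ∈ convexHull ℝ (B : Set (E n)) ↔ v ∈ B := by
  obtain ⟨φ, rfl⟩ := hB
  constructor
  · intro h
    have := (face_eq_hull hV φ).symm ▸ h
    obtain ⟨hP, hmax⟩ := this
    exact mem_ramax.2 ⟨hv, fun w hw => hmax w (subset_convexHull ℝ _ hw)⟩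
  · intro h
    exact subset_convexHull ℝ _ h

lemma hull_subset_iff {B B' : Finset (E n)} (hV : V.Nonempty) (hB : Expo V B)
    (hB' : Expo V B') :
    convexHull ℝ (B : Set (E n)) ⊆ convexHull ℝ (B' : Set (E n)) ↔ B ⊆ B' := by
  constructor
  · intro h x hx
    exact (mem_hull_iff hV hB' (expo_subset hB hx)).1
      (h (subset_convexHull ℝ _ (Finset.mem_coe.2 hx)))
  · intro h
    exact convexHull_mono (Finset.coe_subset.2 h)

lemma hull_inj {B B' : Finset (E n)} (hV : V.Nonempty) (hB : Expo V B) (hB' : Expo V B')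
    (h : convexHull ℝ (B : Set (E n)) = convexHull ℝ (B' : Set (E n))) : B = B' :=
  Finset.Subset.antisymm ((hull_subset_iff hV hB hB').1 h.le)
    ((hull_subset_iff hV hB' hB).1 h.ge)

lemma mem_faces_iff (hV : V.Nonempty) {Q : Set (E n)} :
    Q ∈ faces (convexHull ℝ (V : Set (E n))) ↔
      ∃ B : Finset (E n), Expo V B ∧ Q = convexHull ℝ (B : Set (E n)) := by
  constructor
  · rintro ⟨hface, hne⟩
    rcases hface with rfl | ⟨φ, rfl⟩
    · exact ⟨V, expo_self V, rfl⟩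
    · exact ⟨ramax V φ, ⟨φ, rfl⟩, face_eq_hull hV φ⟩
  · rintro ⟨B, ⟨φ, rfl⟩, rfl⟩
    constructor
    · exact Or.inr ⟨φ, (face_eq_hull hV φ).symm⟩
    · obtain ⟨b, hb⟩ := ramax_nonempty hV φ
      exact ⟨b, subset_convexHull ℝ _ hb⟩

lemma mem_of_mem_affineSpan {B : Finset (E n)} (hB : Expo V B) {u : E n} (hu : u ∈ V)
    (h : u ∈ affineSpan ℝ (B : Set (E n))) : u ∈ B := by
  obtain ⟨φ, rfl⟩ := hB
  obtain ⟨b, hb⟩ := ramax_nonempty ⟨u, hu⟩ φ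
  obtain ⟨hbV, hbmax⟩ := mem_ramax.1 hb
  set H : AffineSubspace ℝ (E n) :=
    AffineSubspace.comap φ.toAffineMap (AffineSubspace.mk' (φ b) (⊥ : Submodule ℝ ℝ)) with hH
  have hBH : (ramax V φ : Set (E n)) ⊆ H := by
    intro x hx
    obtain ⟨hxV, hxmax⟩ := mem_ramax.1 (Finset.mem_coe.1 hx)
    have : φ x = φ b := le_antisymm (hbmax x hxV) (hxmax b hbV)
    simp [hH, AffineSubspace.mem_comap, AffineSubspace.mem_mk', this]
  have hspanle : affineSpan ℝ ((ramax V φ : Finset (E n)) : Set (E n)) ≤ H :=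
    affineSpan_le.2 hBH
  have huH : u ∈ H := hspanle h
  have huφ : φ u = φ b := by
    simpa [hH, AffineSubspace.mem_comap, AffineSubspace.mem_mk',
      sub_eq_zero] using huH
  exact mem_ramax.2 ⟨hu, fun w hw => huφ ▸ hbmax w hw⟩

lemma fdim_le_n (B : Finset (E n)) : fdim B ≤ n := by
  have h := Submodule.finrank_le (vectorSpan ℝ (B : Set (E n)))
  simpa [fdim] using h

lemma fdim_V (hspan : affineSpan ℝ ((V : Set (E n))) = ⊤) : fdim V = n := by
  unfold fdim
  rw [← direction_affineSpan, hspan, AffineSubspace.direction_top, finrank_top]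
  simp

lemma expo_eq_V_of_fdim (hV : V.Nonempty)
    (hspan : affineSpan ℝ ((V : Set (E n))) = ⊤) {B : Finset (E n)}
    (hB : Expo V B) (hd : fdim B = n) : B = V := by
  obtain ⟨b, hbB⟩ := expo_nonempty hV hB
  have htop : vectorSpan ℝ (B : Set (E n)) = ⊤ := by
    apply Submodule.eq_top_of_finrank_eq
    have hfr : Module.finrank ℝ (E n) = n := by simp
    rw [hfr]; exact hd
  have haff : affineSpan ℝ (B : Set (E n)) = ⊤ := by
    apply AffineSubspace.ext_of_direction_eq
    · rw [direction_affineSpan, htop, AffineSubspace.direction_top]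
    · exact ⟨b, mem_affineSpan ℝ (Finset.mem_coe.2 hbB), trivial⟩
  apply Finset.Subset.antisymm (expo_subset hB)
  intro u hu
  exact mem_of_mem_affineSpan hB hu (haff ▸ AffineSubspace.mem_top ℝ _ u)

lemma fdim_lt {B B' : Finset (E n)} (hB : Expo V B) (hB' : Expo V B') (hss : B ⊂ B') :
    fdim B < fdim B' := by
  have hVne : V.Nonempty := by
    obtain ⟨x, hx⟩ := Finset.exists_of_ssubset hss
    exact ⟨x, expo_subset hB' hx.1⟩
  obtain ⟨b, hbB⟩ := expo_nonempty hVne hB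
  have hle : vectorSpan ℝ (B : Set (E n)) ≤ vectorSpan ℝ (B' : Set (E n)) :=
    vectorSpan_mono ℝ (Finset.coe_subset.2 hss.subset)
  have hfle : fdim B ≤ fdim B' := Submodule.finrank_mono hle
  rcases lt_or_eq_of_le hfle with h | h
  · exact h
  · exfalso
    have heq : vectorSpan ℝ (B : Set (E n)) = vectorSpan ℝ (B' : Set (E n)) :=
      Submodule.eq_of_le_of_finrank_le hle h.ge
    have haff : affineSpan ℝ (B : Set (E n)) = affineSpan ℝ (B' : Set (E n)) := by
      apply AffineSubspace.ext_of_direction_eq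
      · rw [direction_affineSpan, direction_affineSpan, heq]
      · exact ⟨b, mem_affineSpan ℝ (Finset.mem_coe.2 hbB),
          mem_affineSpan ℝ (Finset.mem_coe.2 (hss.subset hbB))⟩
    have : B' ⊆ B := by
      intro u hu
      exact mem_of_mem_affineSpan hB (expo_subset hB' hu)
        (haff ▸ mem_affineSpan ℝ (Finset.mem_coe.2 hu))
    exact hss.2 this
  
lemma expo_inter {B B' : Finset (E n)} (hB : Expo V B) (hB' : Expo V B')
    (hne : (B ∩ B').Nonempty) : Expo V (B ∩ B') := by
  obtain ⟨φ, rfl⟩ := hB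
  obtain ⟨φ', rfl⟩ := hB'
  obtain ⟨x, hx⟩ := hne
  obtain ⟨hx1, hx2⟩ := Finset.mem_inter.1 hx
  obtain ⟨hxV, hxmax1⟩ := mem_ramax.1 hx1
  obtain ⟨-, hxmax2⟩ := mem_ramax.1 hx2
  refine ⟨φ + φ', ?_⟩
  ext u
  simp only [Finset.mem_inter, mem_ramax, LinearMap.add_apply]
  constructor
  · rintro ⟨⟨huV, hu1⟩, -, hu2⟩
    exact ⟨huV, fun w hw => by
      have := add_le_add (hu1 w hw) (hu2 w hw); linarith⟩
  · rintro ⟨huV, humax⟩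
    have h1 : φ u ≤ φ x := hxmax1 u huV
    have h2 : φ' u ≤ φ' x := hxmax2 u huV
    have h3 : φ x + φ' x ≤ φ u + φ' u := humax x hxV
    have e1 : φ u = φ x := by linarith
    have e2 : φ' u = φ' x := by linarith
    exact ⟨⟨huV, fun w hw => e1 ▸ hxmax1 w hw⟩, huV, fun w hw => e2 ▸ hxmax2 w hw⟩

end V

end GWT
namespace GWT

open Finset Module

variable {n : ℕ} {V : Finset (E n)}

lemma ramax_of_subset (hV : V.Nonempty) {B W : Finset (E n)} (hB : Expo V B)
    (hWV : W ⊆ V) (hBW : B ⊆ W) : ∃ ψ : Lam n, B = ramax W ψ := by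
  obtain ⟨φ, rfl⟩ := hB
  obtain ⟨b, hb⟩ := ramax_nonempty hV φ
  obtain ⟨hbV, hbmax⟩ := mem_ramax.1 hb
  refine ⟨φ, ?_⟩
  ext x
  simp only [mem_ramax]
  constructor
  · rintro ⟨hxV, hxmax⟩
    exact ⟨hBW (mem_ramax.2 ⟨hxV, hxmax⟩), fun w hw => hxmax w (hWV hw)⟩
  · rintro ⟨hxW, hxmax⟩
    have hxb : φ b ≤ φ x := hxmax b (hBW hb)
    exact ⟨hWV hxW, fun w hw => le_trans (hbmax w hw) hxb⟩

lemma expo_ramax {W : Finset (E n)} (hV : V.Nonempty) (hW : Expo V W) (ψ : Lam n) :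
    Expo V (ramax W ψ) := by
  obtain ⟨φ, hφ⟩ := hW
  by_cases hWV : W = V
  · exact ⟨ψ, by rw [hWV]⟩
  have hWne : W.Nonempty := by rw [hφ]; exact ramax_nonempty hV φ
  have hWsub : W ⊆ V := hφ ▸ ramax_subset
  have hdiff : (V \ W).Nonempty := by
    rw [Finset.sdiff_nonempty]
    intro h
    exact hWV (Finset.Subset.antisymm hWsub h)
  obtain ⟨b₀, hb₀⟩ := ramax_nonempty hWne ψ
  obtain ⟨hb₀W, hb₀max⟩ := mem_ramax.1 hb₀
  have hb₀V : b₀ ∈ V := hWsub hb₀W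
  have hφW : ∀ x ∈ W, ∀ w ∈ V, φ w ≤ φ x := by
    intro x hx
    rw [hφ] at hx
    exact (mem_ramax.1 hx).2
  have hφconst : ∀ x ∈ W, φ x = φ b₀ :=
    fun x hx => le_antisymm (hφW b₀ hb₀W x (hWsub hx)) (hφW x hx b₀ hb₀V)
  set γ := (V \ W).inf' hdiff (fun u => φ b₀ - φ u) with hγdef
  have hγpos : 0 < γ := by
    rw [hγdef, Finset.lt_inf'_iff]
    intro u hu
    obtain ⟨huV, huW⟩ := Finset.mem_sdiff.1 hu
    have hle : φ u ≤ φ b₀ := hφW b₀ hb₀W u huV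
    rcases lt_or_eq_of_le hle with h | h
    · linarith
    · exfalso
      apply huW
      rw [hφ]
      exact mem_ramax.2 ⟨huV, fun w hw => h ▸ hφW b₀ hb₀W w hw⟩
  set K := V.sup' hV ψ - V.inf' hV ψ with hKdef
  have hKnn : 0 ≤ K := by
    have h1 : V.inf' hV ψ ≤ ψ b₀ := Finset.inf'_le _ hb₀V
    have h2 : ψ b₀ ≤ V.sup' hV ψ := Finset.le_sup' _ hb₀V
    rw [hKdef]; linarith
  set ε := γ / (K + 1) with hεdef
  have hεpos : 0 < ε := div_pos hγpos (by linarith)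
  have hεK : ε * K < γ := by
    rw [hεdef, div_mul_eq_mul_div, div_lt_iff₀ (by linarith : (0:ℝ) < K + 1)]
    nlinarith
  have key : ∀ u ∈ V, u ∉ W → ∀ x ∈ ramax W ψ, φ u + ε * ψ u < φ b₀ + ε * ψ x := by
    intro u huV huW x hx
    have hxW : x ∈ W := ramax_subset hx
    have h1 : γ ≤ φ b₀ - φ u := Finset.inf'_le _ (Finset.mem_sdiff.2 ⟨huV, huW⟩)
    have h2 : ψ u - ψ x ≤ K := by
      have := Finset.le_sup' ψ huV
      have := Finset.inf'_le ψ (hWsub hxW)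
      rw [hKdef]; linarith
    have h3 : ε * (ψ u - ψ x) ≤ ε * K := mul_le_mul_of_nonneg_left h2 (le_of_lt hεpos)
    nlinarith
  refine ⟨φ + ε • ψ, ?_⟩
  ext y
  simp only [mem_ramax, LinearMap.add_apply, LinearMap.smul_apply, smul_eq_mul]
  constructor
  · rintro ⟨hyW, hymax⟩
    have hyV : y ∈ V := hWsub hyW
    refine ⟨hyV, fun u hu => ?_⟩
    by_cases huW : u ∈ W
    · have : φ u = φ y := by rw [hφconst u huW, hφconst y hyW]
      have : ψ u ≤ ψ y := hymax u huW
      nlinarith [hφconst u huW, hφconst y hyW]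
    · have := key u hu huW y (mem_ramax.2 ⟨hyW, hymax⟩)
      rw [hφconst y hyW]
      linarith
  · rintro ⟨hyV, hymax⟩
    have hyW : y ∈ W := by
      by_contra hyW
      have h1 := key y hyV hyW b₀ hb₀
      have h2 := hymax b₀ hb₀V
      linarith
    refine ⟨hyW, fun w hw => ?_⟩
    have h1 : φ w + ε * ψ w ≤ φ y + ε * ψ y := hymax w (hWsub hw)
    have h2 : φ w = φ y := by rw [hφconst w hw, hφconst y hyW]
    have : ε * ψ w ≤ ε * ψ y := by linarith
    exact le_of_mul_le_mul_left (by linarith) hεpos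

lemma vertex_exists {B : Finset (E n)} (hV : V.Nonempty) (hB : Expo V B) :
    ∃ v ∈ B, Expo V {v} := by
  have main : ∀ S : Finset (Fin n), ∃ C : Finset (E n), Expo V C ∧ C ⊆ B ∧ C.Nonempty ∧
      ∀ x ∈ C, ∀ y ∈ C, ∀ i ∈ S, x i = y i := by
    intro S
    induction S using Finset.induction with
    | empty => exact ⟨B, hB, Finset.Subset.refl B, expo_nonempty hV hB, by simp⟩
    | insert i S hnotmem ih =>
      obtain ⟨C, hC, hCB, hCne, hCcoord⟩ := ih
      refine ⟨ramax C (LinearMap.proj i), expo_ramax hV hC _,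
        Finset.Subset.trans ramax_subset hCB, ramax_nonempty hCne _, ?_⟩
      intro x hx y hy j hj
      rcases Finset.mem_insert.1 hj with rfl | hjS
      · obtain ⟨hxC, hxmax⟩ := mem_ramax.1 hx
        obtain ⟨hyC, hymax⟩ := mem_ramax.1 hy
        exact le_antisymm (hymax x hxC) (hxmax y hyC)
      · exact hCcoord x (ramax_subset hx) y (ramax_subset hy) j hjS
  obtain ⟨C, hC, hCB, ⟨v, hv⟩, hCcoord⟩ := main Finset.univ
  have hCv : C = {v} := by
    apply Finset.eq_singleton_iff_unique_mem.2
    exact ⟨hv, fun x hx => funext fun i => hCcoord x hx v hv i (Finset.mem_univ i)⟩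
  exact ⟨v, hCB hv, hCv ▸ hC⟩

lemma rotate {W : Finset (E n)} {ψ η : Lam n} {b : E n} (hb : b ∈ ramax W ψ)
    (hconst : ∀ x ∈ ramax W ψ, η x = η b) {u₀ : E n} (hu₀ : u₀ ∈ W) (hη : η b < η u₀) :
    ∃ s : ℝ, 0 < s ∧ ramax W ψ ⊂ ramax W (ψ + s • η) ∧
      ∀ x ∈ ramax W (ψ + s • η), x ∉ ramax W ψ → η b < η x := by
  classical
  obtain ⟨hbW, hbmax⟩ := mem_ramax.1 hb
  set B := ramax W ψ with hBdef
  set T := W.filter (fun u => η b < η u) with hTdef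
  have hT : T.Nonempty := ⟨u₀, Finset.mem_filter.2 ⟨hu₀, hη⟩⟩
  have hTfacts : ∀ u ∈ T, u ∈ W ∧ η b < η u ∧ ψ u < ψ b := by
    intro u hu
    obtain ⟨huW, huη⟩ := Finset.mem_filter.1 hu
    have huB : u ∉ B := fun h => absurd (hconst u h) (by intro e; rw [e] at huη; exact lt_irrefl _ huη)
    have hule : ψ u ≤ ψ b := hbmax u huW
    rcases lt_or_eq_of_le hule with h | h
    · exact ⟨huW, huη, h⟩
    · exact absurd (mem_ramax.2 ⟨huW, fun w hw => h ▸ hbmax w hw⟩) huB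
  set r : E n → ℝ := fun u => (ψ b - ψ u) / (η u - η b) with hrdef
  set s := T.inf' hT r with hsdef
  have hspos : 0 < s := by
    rw [hsdef, Finset.lt_inf'_iff]
    intro u hu
    obtain ⟨_, h1, h2⟩ := hTfacts u hu
    exact div_pos (by linarith) (by linarith)
  have key : ∀ u ∈ W, ψ u + s * η u ≤ ψ b + s * η b := by
    intro u huW
    by_cases huT : u ∈ T
    · obtain ⟨-, h1, h2⟩ := hTfacts u huT
      have hls : s ≤ r u := Finset.inf'_le _ huT
      rw [hrdef] at hls
      have := (le_div_iff₀ (by linarith : (0:ℝ) < η u - η b)).1 hls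
      nlinarith
    · have h1 : ¬ (η b < η u) := fun h => huT (Finset.mem_filter.2 ⟨huW, h⟩)
      push_neg at h1
      have h2 : ψ u ≤ ψ b := hbmax u huW
      nlinarith
  have hBsub : B ⊆ ramax W (ψ + s • η) := by
    intro x hx
    obtain ⟨hxW, hxmax⟩ := mem_ramax.1 hx
    have hψx : ψ x = ψ b := le_antisymm (hbmax x hxW) (hxmax b hbW)
    have hηx : η x = η b := hconst x hx
    refine mem_ramax.2 ⟨hxW, fun w hw => ?_⟩
    simp only [LinearMap.add_apply, LinearMap.smul_apply, smul_eq_mul]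
    rw [hψx, hηx]
    exact key w hw
  obtain ⟨u₁, hu₁T, hu₁r⟩ := Finset.exists_mem_eq_inf' hT r
  obtain ⟨hu₁W, hu₁η, hu₁ψ⟩ := hTfacts u₁ hu₁T
  have hu₁eq : ψ u₁ + s * η u₁ = ψ b + s * η b := by
    have : s * (η u₁ - η b) = ψ b - ψ u₁ := by
      have hden : (0:ℝ) < η u₁ - η b := by linarith
      have : s = (ψ b - ψ u₁) / (η u₁ - η b) := by rw [hsdef, hu₁r]
      rw [this, div_mul_cancel₀]
      exact ne_of_gt hden
    nlinarith [this]
  have hu₁mem : u₁ ∈ ramax W (ψ + s • η) := by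
    refine mem_ramax.2 ⟨hu₁W, fun w hw => ?_⟩
    simp only [LinearMap.add_apply, LinearMap.smul_apply, smul_eq_mul]
    rw [hu₁eq]
    exact key w hw
  have hu₁B : u₁ ∉ B := by
    intro h
    have := hconst u₁ h
    rw [this] at hu₁η
    exact lt_irrefl _ hu₁η
  refine ⟨s, hspos, Finset.ssubset_def.2 ⟨hBsub, fun h => hu₁B (h hu₁mem)⟩, ?_⟩
  intro x hx hxB
  obtain ⟨hxW, hxmax⟩ := mem_ramax.1 hx
  have hψx : ψ x < ψ b := by
    have hle : ψ x ≤ ψ b := hbmax x hxW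
    rcases lt_or_eq_of_le hle with h | h
    · exact h
    · exact absurd (mem_ramax.2 ⟨hxW, fun w hw => h ▸ hbmax w hw⟩) hxB
  have := hxmax b hbW
  simp only [LinearMap.add_apply, LinearMap.smul_apply, smul_eq_mul] at this
  by_contra hcon
  push_neg at hcon
  have : s * η x ≤ s * η b := mul_le_mul_of_nonneg_left hcon (le_of_lt hspos)
  nlinarith [hxmax b hbW]

end GWT
namespace GWT

open Finset Module

variable {n : ℕ} {V : Finset (E n)}

lemma enlarge {W : Finset (E n)} {ψ : Lam n} {w b : E n} (hw : w ∈ W)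
    (hwn : w ∉ ramax W ψ) (hb : b ∈ ramax W ψ)
    (hdim : fdim (ramax W ψ) + 2 ≤ fdim W) :
    ∃ ψ' : Lam n, ramax W ψ ⊂ ramax W ψ' ∧ w ∉ ramax W ψ' := by
  classical
  set B := ramax W ψ with hBdef
  have hbW : b ∈ W := ramax_subset hb
  set Z : Submodule ℝ (E n) :=
    vectorSpan ℝ (B : Set (E n)) ⊔ Submodule.span ℝ {w - b} with hZdef
  have hZrank : finrank ℝ Z < fdim W := by
    have h1 : finrank ℝ Z ≤ finrank ℝ (vectorSpan ℝ (B : Set (E n)))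
        + finrank ℝ (Submodule.span ℝ ({w - b} : Set (E n))) :=
      Submodule.finrank_add_le_finrank_add_finrank
        (vectorSpan ℝ (B : Set (E n))) (Submodule.span ℝ {w - b})
    have h2 : finrank ℝ (Submodule.span ℝ ({w - b} : Set (E n))) ≤ 1 := by
      rcases eq_or_ne (w - b) 0 with hwb | hwb
      · rw [hwb, Submodule.span_zero_singleton]
        rw [finrank_bot]
        omega
      · rw [finrank_span_singleton hwb]
    have h3 : finrank ℝ (vectorSpan ℝ (B : Set (E n))) = fdim B := rfl
    omega
  have hex : ∃ u ∈ W, u - b ∉ Z := by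
    by_contra hcon
    push_neg at hcon
    have hle : vectorSpan ℝ (W : Set (E n)) ≤ Z := by
      rw [vectorSpan_eq_span_vsub_set_right ℝ (Finset.mem_coe.2 hbW)]
      rw [Submodule.span_le]
      rintro x ⟨u, hu, rfl⟩
      exact hcon u (Finset.mem_coe.1 hu)
    have hge : fdim W ≤ finrank ℝ Z := Submodule.finrank_mono hle
    exact absurd (lt_of_le_of_lt hge hZrank) (lt_irrefl _)
  obtain ⟨u, huW, huZ⟩ := hex
  obtain ⟨f, hf0, hfbot⟩ := Submodule.exists_dual_map_eq_bot_of_notMem huZ inferInstance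
  have hfZ : ∀ z ∈ Z, f z = 0 := by
    intro z hz
    have : f z ∈ Z.map f := Submodule.mem_map_of_mem hz
    rwa [hfbot, Submodule.mem_bot] at this
  set η : Lam n := if 0 < f (u - b) then f else -f with hηdef
  have hηZ : ∀ z ∈ Z, η z = 0 := by
    intro z hz
    rw [hηdef]
    split_ifs <;> simp [hfZ z hz]
  have hηu : 0 < η (u - b) := by
    rw [hηdef]
    split_ifs with h
    · exact h
    · simp only [LinearMap.neg_apply]
      rcases lt_trichotomy (f (u - b)) 0 with h' | h' | h'
      · linarith
      · exact absurd h' hf0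
      · exact absurd h' h
  have hconst : ∀ x ∈ B, η x = η b := by
    intro x hx
    have : x - b ∈ Z := hZdef ▸ Submodule.mem_sup_left
      (vsub_mem_vectorSpan ℝ (Finset.mem_coe.2 hx) (Finset.mem_coe.2 hb))
    have := hηZ _ this
    rw [map_sub] at this
    linarith
  have hηw : η w = η b := by
    have : w - b ∈ Z := hZdef ▸ Submodule.mem_sup_right
      (Submodule.mem_span_singleton_self _)
    have := hηZ _ this
    rw [map_sub] at this
    linarith
  have hηbu : η b < η u := by
    have := hηu
    rw [map_sub] at this
    linarith
  obtain ⟨s, hs, hss, hnew⟩ := rotate hb hconst huW hηbu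
  refine ⟨ψ + s • η, hss, fun hmem => ?_⟩
  have := hnew w hmem hwn
  rw [hηw] at this
  exact lt_irrefl _ this

lemma cover_exists {B B'' : Finset (E n)} (hV : V.Nonempty) (hB : Expo V B)
    (hB'' : Expo V B'') (hss : B ⊂ B'') :
    ∃ C, Expo V C ∧ B ⊂ C ∧ C ⊆ B'' ∧ fdim C = fdim B + 1 := by
  have main : ∀ d : ℕ, ∀ B B'' : Finset (E n), Expo V B → Expo V B'' → B ⊂ B'' →
      fdim B'' ≤ d → ∃ C, Expo V C ∧ B ⊂ C ∧ C ⊆ B'' ∧ fdim C = fdim B + 1 := by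
    intro d
    induction d with
    | zero =>
      intro B B'' hB hB'' hss hd
      exact absurd (Nat.lt_of_lt_of_le (fdim_lt hB hB'' hss) hd) (Nat.not_lt_zero _)
    | succ d ih =>
      intro B B'' hB hB'' hss hd
      by_cases hone : fdim B'' = fdim B + 1
      · exact ⟨B'', hB'', hss, Finset.Subset.refl _, hone⟩
      · have hlt : fdim B < fdim B'' := fdim_lt hB hB'' hss
        have h2 : fdim B + 2 ≤ fdim B'' := by omega
        obtain ⟨w, hwB'', hwB⟩ := Finset.exists_of_ssubset hss
        obtain ⟨ψ, hψ⟩ := ramax_of_subset hV hB (expo_subset hB'') hss.subset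
        obtain ⟨b, hbB⟩ := expo_nonempty hV hB
        obtain ⟨ψ', hss', hwn'⟩ := enlarge (W := B'') (ψ := ψ) hwB''
          (by rw [← hψ]; exact hwB) (by rw [← hψ]; exact hbB)
          (by rw [← hψ]; exact h2)
        rw [← hψ] at hss'
        set B₁ := ramax B'' ψ' with hB₁def
        have hB₁expo : Expo V B₁ := expo_ramax hV hB'' ψ'
        have hB₁sub : B₁ ⊆ B'' := ramax_subset
        have hB₁lt : fdim B₁ < fdim B'' := by
          apply fdim_lt hB₁expo hB''
          exact Finset.ssubset_def.2 ⟨hB₁sub, fun h => hwn' (h hwB'')⟩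
        obtain ⟨C, hC, hBC, hCB₁, hCd⟩ := ih B B₁ hB hB₁expo hss' (by omega)
        exact ⟨C, hC, hBC, Finset.Subset.trans hCB₁ hB₁sub, hCd⟩
  exact main (fdim B'') B B'' hB hB'' hss (le_refl _)

lemma facet_separate {B : Finset (E n)} (hV : V.Nonempty)
    (hspan : affineSpan ℝ ((V : Set (E n))) = ⊤)
    (hB : Expo V B) {u : E n} (hu : u ∈ V) (hun : u ∉ B) :
    ∃ C, Expo V C ∧ fdim C = n - 1 ∧ B ⊆ C ∧ u ∉ C := by
  classical
  set 𝒞 := V.powerset.filter (fun C => Expo V C ∧ B ⊆ C ∧ u ∉ C) with h𝒞def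
  have h𝒞ne : 𝒞.Nonempty :=
    ⟨B, Finset.mem_filter.2 ⟨Finset.mem_powerset.2 (expo_subset hB),
      hB, Finset.Subset.refl B, hun⟩⟩
  obtain ⟨C, hC𝒞, hCmax⟩ := 𝒞.exists_max_image Finset.card h𝒞ne
  obtain ⟨hCV, hCexpo, hBC, huC⟩ := Finset.mem_filter.1 hC𝒞
  refine ⟨C, hCexpo, ?_, hBC, huC⟩
  have hCn : fdim C ≤ n := fdim_le_n C
  have hCne : fdim C ≠ n := by
    intro h
    exact huC ((expo_eq_V_of_fdim hV hspan hCexpo h) ▸ hu)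
  by_contra hne
  have h2 : fdim C + 2 ≤ n := by
    have h1 : fdim C < n := lt_of_le_of_ne hCn hCne
    have hn1 : n ≠ 0 := by omega
    omega
  have hCexpo2 : Expo V C := hCexpo
  obtain ⟨ψ, hψ⟩ := hCexpo2
  obtain ⟨b, hbC⟩ := expo_nonempty hV hCexpo
  obtain ⟨ψ', hss', hun'⟩ := enlarge (W := V) (ψ := ψ) hu
    (by rw [← hψ]; exact huC) (by rw [← hψ]; exact hbC)
    (by rw [← hψ, fdim_V hspan]; exact h2)
  rw [← hψ] at hss'
  have hC' : ramax V ψ' ∈ 𝒞 := Finset.mem_filter.2 ⟨Finset.mem_powerset.2 ramax_subset,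
    ⟨ψ', rfl⟩, Finset.Subset.trans hBC hss'.subset, hun'⟩
  have := hCmax _ hC'
  have := Finset.card_lt_card hss'
  omega

end GWT
namespace GWT

open Finset Module

variable {n : ℕ}

open scoped Classical in
/-- facets (dimension `n-1` exposed sets) containing the vertex `v` -/
def facetsAt (V : Finset (E n)) (v : E n) : Finset (Finset (E n)) :=
  V.powerset.filter (fun C => Expo V C ∧ fdim C = n - 1 ∧ v ∈ C)

open scoped Classical in
/-- facets at `v` containing `B` -/
def Sv (V : Finset (E n)) (v : E n) (B : Finset (E n)) : Finset (Finset (E n)) :=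
  (facetsAt V v).filter (fun C => B ⊆ C)

lemma mem_facetsAt {V : Finset (E n)} {v : E n} {C : Finset (E n)} :
    C ∈ facetsAt V v ↔ Expo V C ∧ fdim C = n - 1 ∧ v ∈ C := by
  simp only [facetsAt, Finset.mem_filter, Finset.mem_powerset]
  exact ⟨fun h => h.2, fun h => ⟨expo_subset h.1, h⟩⟩

lemma mem_Sv {V : Finset (E n)} {v : E n} {B C : Finset (E n)} :
    C ∈ Sv V v B ↔ (Expo V C ∧ fdim C = n - 1 ∧ v ∈ C) ∧ B ⊆ C := by
  simp only [Sv, Finset.mem_filter, mem_facetsAt]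

lemma Sv_anti {V : Finset (E n)} {v : E n} {B B' : Finset (E n)} (h : B ⊆ B') :
    Sv V v B' ⊆ Sv V v B := by
  intro C hC
  rw [mem_Sv] at hC ⊢
  exact ⟨hC.1, Finset.Subset.trans h hC.2⟩

section VertexCtx

variable {V : Finset (E n)} {v : E n}

lemma recover (hV : V.Nonempty) (hspan : affineSpan ℝ ((V : Set (E n))) = ⊤)
    {B : Finset (E n)} (hB : Expo V B) (hvB : v ∈ B) {u : E n} (hu : u ∈ V)
    (h : ∀ C ∈ Sv V v B, u ∈ C) : u ∈ B := by
  by_contra hun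
  obtain ⟨C, hCexpo, hCdim, hBC, huC⟩ := facet_separate hV hspan hB hu hun
  exact huC (h C (mem_Sv.2 ⟨⟨hCexpo, hCdim, hBC hvB⟩, hBC⟩))

lemma Sv_le (hV : V.Nonempty) (hspan : affineSpan ℝ ((V : Set (E n))) = ⊤)
    {B B' : Finset (E n)} (hB : Expo V B) (hB' : Expo V B') (hvB : v ∈ B) (hvB' : v ∈ B')
    (h : Sv V v B' ⊆ Sv V v B) : B ⊆ B' := by
  intro u huB
  apply recover hV hspan hB' hvB' (expo_subset hB huB)
  intro C hC
  exact (mem_Sv.1 (h hC)).2 huB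

lemma Sv_inj (hV : V.Nonempty) (hspan : affineSpan ℝ ((V : Set (E n))) = ⊤)
    {B B' : Finset (E n)} (hB : Expo V B) (hB' : Expo V B') (hvB : v ∈ B) (hvB' : v ∈ B')
    (h : Sv V v B = Sv V v B') : B = B' :=
  Finset.Subset.antisymm (Sv_le hV hspan hB hB' hvB hvB' h.ge)
    (Sv_le hV hspan hB' hB hvB' hvB h.le)

lemma card_Sv_chain (hV : V.Nonempty) (hspan : affineSpan ℝ ((V : Set (E n))) = ⊤) :
    ∀ (m : ℕ) (B B' : Finset (E n)), Expo V B → Expo V B' → v ∈ B → B ⊆ B' →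
      fdim B' = fdim B + m → (Sv V v B').card + m ≤ (Sv V v B).card := by
  intro m
  induction m with
  | zero =>
    intro B B' hB hB' hvB hsub hfd
    have := Finset.card_le_card (Sv_anti (V := V) (v := v) hsub)
    omega
  | succ m ih =>
    intro B B' hB hB' hvB hsub hfd
    have hne : B ≠ B' := by
      intro h; rw [h] at hfd; omega
    obtain ⟨C, hCexpo, hBC, hCB', hCfd⟩ :=
      cover_exists hV hB hB' (Finset.ssubset_iff_subset_ne.2 ⟨hsub, hne⟩)
    have hvC : v ∈ C := hBC.subset hvB
    have hlt : (Sv V v C).card < (Sv V v B).card := by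
      apply Finset.card_lt_card
      refine Finset.ssubset_iff_subset_ne.2 ⟨Sv_anti hBC.subset, ?_⟩
      intro h
      exact hBC.ne (Sv_inj hV hspan hB hCexpo hvB hvC h.symm)
    have := ih C B' hCexpo hB' hvC hCB' (by omega)
    omega

lemma fdim_singleton (v : E n) : fdim ({v} : Finset (E n)) = 0 := by
  unfold fdim
  rw [Finset.coe_singleton, vectorSpan_singleton]
  exact finrank_bot ℝ (E n)

lemma Sv_V_empty (hn : 1 ≤ n) (hspan : affineSpan ℝ ((V : Set (E n))) = ⊤) :
    Sv V v V = ∅ := by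
  apply Finset.eq_empty_of_forall_notMem
  intro C hC
  obtain ⟨⟨hCexpo, hCdim, -⟩, hVC⟩ := mem_Sv.1 hC
  have : C = V := Finset.Subset.antisymm (expo_subset hCexpo) hVC
  rw [this, fdim_V hspan] at hCdim
  omega

lemma Sv_vertex (hvE : Expo V {v}) : Sv V v {v} = facetsAt V v := by
  apply Finset.filter_true_of_mem
  intro C hC
  simp only [Finset.singleton_subset_iff]
  exact (mem_facetsAt.1 hC).2.2

lemma grade (hn : 1 ≤ n) (hV : V.Nonempty) (hspan : affineSpan ℝ ((V : Set (E n))) = ⊤)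
    (hsimp : (facetsAt V v).card = n) (hvE : Expo V {v})
    {B : Finset (E n)} (hB : Expo V B) (hvB : v ∈ B) :
    (Sv V v B).card = n - fdim B := by
  have hfle : fdim B ≤ n := fdim_le_n B
  have h1 := card_Sv_chain hV hspan (n - fdim B) B V hB (expo_self V) hvB
    (expo_subset hB) (by rw [fdim_V hspan]; omega)
  rw [Sv_V_empty hn hspan] at h1
  simp only [Finset.card_empty] at h1
  have h2 := card_Sv_chain hV hspan (fdim B) {v} B hvE hB (Finset.mem_singleton_self v)
    (Finset.singleton_subset_iff.2 hvB) (by rw [fdim_singleton]; omega)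
  rw [Sv_vertex hvE, hsimp] at h2
  omega

lemma cover_erase (hn : 1 ≤ n) (hV : V.Nonempty)
    (hspan : affineSpan ℝ ((V : Set (E n))) = ⊤)
    (hsimp : (facetsAt V v).card = n) (hvE : Expo V {v})
    {B C : Finset (E n)} (hB : Expo V B) (hvB : v ∈ B) (hC : C ∈ Sv V v B) :
    ∃ B', Expo V B' ∧ B ⊆ B' ∧ Sv V v B' = (Sv V v B).erase C := by
  obtain ⟨⟨hCexpo, hCdim, hvC⟩, hBC⟩ := mem_Sv.1 hC
  have hCexpo2 : Expo V C := hCexpo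
  obtain ⟨φC, hφC⟩ := hCexpo2
  have hBexpo2 : Expo V B := hB
  obtain ⟨ψB, hψB⟩ := hBexpo2
  obtain ⟨b, hbB⟩ := expo_nonempty hV hB
  have hCmax : ∀ x ∈ C, ∀ w ∈ V, φC w ≤ φC x := by
    intro x hx
    rw [hφC] at hx
    exact (mem_ramax.1 hx).2
  have hbC : b ∈ C := hBC hbB
  have hbV : b ∈ V := expo_subset hB hbB
  -- C is proper
  have hCneV : C ≠ V := by
    intro h
    rw [h, fdim_V hspan] at hCdim
    omega
  obtain ⟨u₀, hu₀V, hu₀C⟩ : ∃ u₀, u₀ ∈ V ∧ u₀ ∉ C := by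
    by_contra hcon
    push_neg at hcon
    exact hCneV (Finset.Subset.antisymm (expo_subset hCexpo) hcon)
  have hu₀lt : φC u₀ < φC b := by
    rcases lt_or_eq_of_le (hCmax b hbC u₀ hu₀V) with h | h
    · exact h
    · exfalso
      apply hu₀C
      rw [hφC]
      exact mem_ramax.2 ⟨hu₀V, fun w hw => h ▸ hCmax b hbC w hw⟩
  set η : Lam n := -φC with hηdef
  have hbram : b ∈ ramax V ψB := hψB ▸ hbB
  have hconst : ∀ x ∈ ramax V ψB, η x = η b := by
    intro x hx
    rw [← hψB] at hx
    have hxC : x ∈ C := hBC hx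
    have : φC x = φC b :=
      le_antisymm (hCmax b hbC x (expo_subset hB hx)) (hCmax x hxC b hbV)
    simp [hηdef, this]
  have hηlt : η b < η u₀ := by simp [hηdef]; linarith
  obtain ⟨s, hs, hss, hnew⟩ := rotate hbram hconst hu₀V hηlt
  rw [← hψB] at hss
  set B₁ := ramax V (ψB + s • η) with hB₁def
  have hB₁expo : Expo V B₁ := ⟨ψB + s • η, rfl⟩
  have hnewC : ∀ x ∈ B₁, x ∉ B → x ∉ C := by
    intro x hx hxB hxC
    have := hnew x hx (by rw [← hψB]; exact hxB)
    simp only [hηdef, LinearMap.neg_apply] at this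
    have : φC x < φC b := by linarith
    have := hCmax x hxC b hbV
    linarith
  have hinter : B₁ ∩ C = B := by
    apply Finset.Subset.antisymm
    · intro x hx
      obtain ⟨hx1, hx2⟩ := Finset.mem_inter.1 hx
      by_contra hxB
      exact hnewC x hx1 hxB hx2
    · intro x hx
      exact Finset.mem_inter.2 ⟨hss.subset hx, hBC hx⟩
  obtain ⟨B', hB'expo, hBB', hB'B₁, hB'fd⟩ := cover_exists hV hB hB₁expo hss
  have hvB' : v ∈ B' := hBB'.subset hvB
  have hnotC : ¬ B' ⊆ C := by
    intro h
    have : B' ⊆ B := by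
      rw [← hinter]
      exact Finset.subset_inter hB'B₁ h
    exact hBB'.2 this
  have hCnotin : C ∉ Sv V v B' := by
    intro h
    exact hnotC (mem_Sv.1 h).2
  have hsub : Sv V v B' ⊆ (Sv V v B).erase C := by
    intro D hD
    rw [Finset.mem_erase]
    exact ⟨fun h => hCnotin (h ▸ hD), Sv_anti hBB'.subset hD⟩
  have hcard1 : (Sv V v B').card = n - fdim B' := grade hn hV hspan hsimp hvE hB'expo hvB'
  have hcard2 : (Sv V v B).card = n - fdim B := grade hn hV hspan hsimp hvE hB hvB
  have hfle : fdim B' ≤ n := fdim_le_n B'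
  have hcard3 : ((Sv V v B).erase C).card = (Sv V v B).card - 1 :=
    Finset.card_erase_of_mem hC
  have : ((Sv V v B).erase C).card ≤ (Sv V v B').card := by omega
  exact ⟨B', hB'expo, hBB'.subset, (Finset.eq_of_subset_of_card_le hsub this)⟩

lemma Sv_surj (hn : 1 ≤ n) (hV : V.Nonempty)
    (hspan : affineSpan ℝ ((V : Set (E n))) = ⊤)
    (hsimp : (facetsAt V v).card = n) (hvE : Expo V {v})
    {B₀ : Finset (E n)} (hB₀ : Expo V B₀) (hvB₀ : v ∈ B₀) :
    ∀ T ⊆ Sv V v B₀, ∃ B, Expo V B ∧ B₀ ⊆ B ∧ v ∈ B ∧ Sv V v B = T := by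
  suffices h : ∀ (k : ℕ) (T : Finset (Finset (E n))), T ⊆ Sv V v B₀ →
      (Sv V v B₀).card = T.card + k → ∃ B, Expo V B ∧ B₀ ⊆ B ∧ v ∈ B ∧ Sv V v B = T by
    intro T hT
    exact h ((Sv V v B₀).card - T.card) T hT (by
      have := Finset.card_le_card hT; omega)
  intro k
  induction k with
  | zero =>
    intro T hT hcard
    exact ⟨B₀, hB₀, Finset.Subset.refl _, hvB₀,
      (Finset.eq_of_subset_of_card_le hT (by omega)).symm ▸ rfl⟩
  | succ k ih =>
    intro T hT hcard
    have hTne : T ≠ Sv V v B₀ := by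
      intro h; rw [h] at hcard; omega
    obtain ⟨C, hCS, hCT⟩ := Finset.exists_of_ssubset
      (Finset.ssubset_iff_subset_ne.2 ⟨hT, hTne⟩)
    set T' := insert C T with hT'def
    have hT'sub : T' ⊆ Sv V v B₀ := Finset.insert_subset hCS hT
    have hT'card : (Sv V v B₀).card = T'.card + k := by
      rw [hT'def, Finset.card_insert_of_notMem hCT]; omega
    obtain ⟨B', hB'expo, hB₀B', hvB', hSvB'⟩ := ih T' hT'sub hT'card
    have hCB' : C ∈ Sv V v B' := by rw [hSvB', hT'def]; exact Finset.mem_insert_self C T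
    obtain ⟨B'', hB''expo, hB'B'', hSvB''⟩ :=
      cover_erase hn hV hspan hsimp hvE hB'expo hvB' hCB'
    refine ⟨B'', hB''expo, Finset.Subset.trans hB₀B' hB'B'', hB'B'' hvB', ?_⟩
    rw [hSvB'', hSvB', hT'def, Finset.erase_insert hCT]

end VertexCtx

end GWT
namespace GWT

open Finset Module Polynomial

lemma geom_aux (c : ℕ) :
    (∑ m ∈ Finset.range c, (c.choose m) • ((Polynomial.X : Polynomial ℤ) - 1) ^ (c - m))
      = Polynomial.X ^ c - 1 := by
  have h := add_pow (1 : Polynomial ℤ) (Polynomial.X - 1) c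
  have hx : (1 : Polynomial ℤ) + (Polynomial.X - 1) = Polynomial.X := by ring
  rw [hx, Finset.sum_range_succ] at h
  simp only [one_pow, one_mul, Nat.sub_self, pow_zero, Nat.choose_self, Nat.cast_one,
    mul_one] at h
  calc ∑ m ∈ Finset.range c, (c.choose m) • ((Polynomial.X : Polynomial ℤ) - 1) ^ (c - m)
      = ∑ m ∈ Finset.range c,
          ((Polynomial.X : Polynomial ℤ) - 1) ^ (c - m) * ((c.choose m : ℕ) : Polynomial ℤ) := by
        refine Finset.sum_congr rfl fun m _ => ?_
        rw [nsmul_eq_mul, mul_comm]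
    _ = Polynomial.X ^ c - 1 := eq_sub_of_add_eq h.symm

lemma sum_powerset_poly {α : Type*} [DecidableEq α] (S₀ : Finset α) :
    ∑ T ∈ S₀.powerset.erase S₀, ((Polynomial.X : Polynomial ℤ) - 1) ^ (S₀.card - T.card - 1)
      = ∑ i ∈ Finset.range S₀.card, (Polynomial.X : Polynomial ℤ) ^ i := by
  have hXne : (Polynomial.X : Polynomial ℤ) - 1 ≠ 0 := by
    simpa using Polynomial.X_sub_C_ne_zero (1 : ℤ)
  apply mul_right_cancel₀ hXne
  rw [geom_sum_mul]
  have h0 : (∑ T ∈ S₀.powerset.erase S₀,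
        ((Polynomial.X : Polynomial ℤ) - 1) ^ (S₀.card - T.card - 1))
      = (∑ T ∈ S₀.powerset, ((Polynomial.X : Polynomial ℤ) - 1) ^ (S₀.card - T.card - 1))
        - 1 := by
    have h1 := Finset.sum_erase_add S₀.powerset
      (fun T => ((Polynomial.X : Polynomial ℤ) - 1) ^ (S₀.card - T.card - 1))
      (Finset.mem_powerset_self S₀)
    have h2 : S₀.card - S₀.card - 1 = 0 := by omega
    simp only [h2, pow_zero] at h1
    exact eq_sub_of_add_eq h1
  rw [h0]
  have h2 : (∑ T ∈ S₀.powerset, ((Polynomial.X : Polynomial ℤ) - 1) ^ (S₀.card - T.card - 1))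
      = ∑ m ∈ Finset.range (S₀.card + 1),
          (S₀.card.choose m) • ((Polynomial.X : Polynomial ℤ) - 1) ^ (S₀.card - m - 1) :=
    Finset.sum_powerset_apply_card (fun j => ((Polynomial.X : Polynomial ℤ) - 1) ^ (S₀.card - j - 1))
  rw [h2, Finset.sum_range_succ]
  have h3 : S₀.card - S₀.card - 1 = 0 := by omega
  rw [h3, pow_zero, Nat.choose_self, one_smul]
  rw [sub_mul, add_mul, one_mul]
  have h4 : (∑ m ∈ Finset.range S₀.card,
        (S₀.card.choose m) • ((Polynomial.X : Polynomial ℤ) - 1) ^ (S₀.card - m - 1))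
          * (Polynomial.X - 1)
      = ∑ m ∈ Finset.range S₀.card,
          (S₀.card.choose m) • ((Polynomial.X : Polynomial ℤ) - 1) ^ (S₀.card - m) := by
    rw [Finset.sum_mul]
    refine Finset.sum_congr rfl fun m hm => ?_
    have hm' : m < S₀.card := Finset.mem_range.1 hm
    rw [smul_mul_assoc, ← pow_succ]
    have heq : S₀.card - m - 1 + 1 = S₀.card - m := by omega
    rw [heq]
  rw [h4, geom_aux]
  ring

lemma coeff_geom (c j : ℕ) (hj : j < c) :
    (∑ i ∈ Finset.range c, (Polynomial.X : Polynomial ℤ) ^ i).coeff j = 1 := by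
  rw [Polynomial.finset_sum_coeff]
  simp only [Polynomial.coeff_X_pow]
  rw [Finset.sum_ite_eq (Finset.range c) j (fun _ => (1 : ℤ))]
  simp [hj]

lemma final_eval (c e : ℕ) (hc : 1 ≤ c) (he : e ≤ c - 1) :
    Polynomial.C ((∑ i ∈ Finset.range c, (Polynomial.X : Polynomial ℤ) ^ i).coeff 0)
      + ∑ i ∈ Finset.Icc 1 e,
          Polynomial.C ((∑ i ∈ Finset.range c, (Polynomial.X : Polynomial ℤ) ^ i).coeff i
            - (∑ i ∈ Finset.range c, (Polynomial.X : Polynomial ℤ) ^ i).coeff (i - 1))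
            * Polynomial.X ^ i = 1 := by
  rw [coeff_geom c 0 (by omega)]
  have hz : ∀ i ∈ Finset.Icc 1 e,
      Polynomial.C ((∑ i ∈ Finset.range c, (Polynomial.X : Polynomial ℤ) ^ i).coeff i
        - (∑ i ∈ Finset.range c, (Polynomial.X : Polynomial ℤ) ^ i).coeff (i - 1))
        * Polynomial.X ^ i = 0 := by
    intro i hi
    obtain ⟨h1, h2⟩ := Finset.mem_Icc.1 hi
    rw [coeff_geom c i (by omega), coeff_geom c (i - 1) (by omega)]
    simp
  rw [Finset.sum_congr rfl hz]
  simp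

end GWT
namespace GWT

open Finset Module Polynomial

variable {n : ℕ}

lemma hull_nonempty {V B : Finset (E n)} (hV : V.Nonempty) (hB : Expo V B) :
    (convexHull ℝ (B : Set (E n))).Nonempty := by
  obtain ⟨b, hb⟩ := expo_nonempty hV hB
  exact ⟨b, subset_convexHull ℝ _ (Finset.mem_coe.2 hb)⟩

theorem main (n : ℕ) (hn : 1 ≤ n) (P : Set (Fin n → ℝ))
    (hP : IsFullLatticePolytope n P) (hs : IsSimple n P)
    (g : Set (Fin n → ℝ) → Polynomial ℤ) (hg : gRecursion n P g) :
    ∀ Q ∈ faces P, g Q = 1 := by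
  classical
  obtain ⟨V, -, rfl, hPaff⟩ := hP
  have hspan : affineSpan ℝ (V : Set (E n)) = ⊤ := by
    rwa [affineSpan_convexHull] at hPaff
  have hV : V.Nonempty := by
    have h := AffineSubspace.nonempty_of_affineSpan_eq_top ℝ (E n) (E n) hspan
    rcases h with ⟨x, hx⟩
    exact ⟨x, hx⟩
  -- translation of simplicity
  have hsimp : ∀ w : E n, Expo V {w} → (facetsAt V w).card = n := by
    intro w hw
    have hwV : w ∈ V := expo_subset hw (Finset.mem_singleton_self w)
    have hhull : convexHull ℝ (({w} : Finset (E n)) : Set (E n)) = ({w} : Set (E n)) := by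
      rw [Finset.coe_singleton, convexHull_singleton]
    have hfaceW : ({w} : Set (E n)) ∈ faces (convexHull ℝ (V : Set (E n))) := by
      rw [mem_faces_iff hV]
      exact ⟨{w}, hw, hhull.symm⟩
    have hpdim : pdim ({w} : Set (E n)) = 0 := by
      rw [← hhull, pdim_hull, fdim_singleton]
    have hcount := hs ({w} : Set (E n)) hfaceW hpdim
    have himage : {F : Set (E n) | F ∈ faces (convexHull ℝ (V : Set (E n))) ∧
        pdim F = n - 1 ∧ ({w} : Set (E n)) ⊆ F}
        = (fun C : Finset (E n) => convexHull ℝ (C : Set (E n))) '' ↑(facetsAt V w) := by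
      ext F
      simp only [Set.mem_setOf_eq, Set.mem_image, Finset.mem_coe, mem_facetsAt]
      constructor
      · rintro ⟨hFf, hFd, hFw⟩
        obtain ⟨C, hCexpo, rfl⟩ := (mem_faces_iff hV).1 hFf
        rw [pdim_hull] at hFd
        exact ⟨C, ⟨hCexpo, hFd,
          (mem_hull_iff hV hCexpo hwV).1 (hFw rfl)⟩, rfl⟩
      · rintro ⟨C, ⟨hCexpo, hCd, hCw⟩, rfl⟩
        refine ⟨(mem_faces_iff hV).2 ⟨C, hCexpo, rfl⟩, by rw [pdim_hull]; exact hCd, ?_⟩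
        intro x hx
        rw [Set.mem_singleton_iff] at hx
        subst hx
        exact subset_convexHull ℝ _ (Finset.mem_coe.2 hCw)
    rw [himage, Set.ncard_image_of_injOn, Set.ncard_coe_finset] at hcount
    · exact hcount
    · intro C1 h1 C2 h2 heq
      exact hull_inj hV (mem_facetsAt.1 (Finset.mem_coe.1 h1)).1
        (mem_facetsAt.1 (Finset.mem_coe.1 h2)).1 heq
  suffices hkey : ∀ (m : ℕ) (Q : Set (E n)), Q ∈ faces (convexHull ℝ (V : Set (E n))) →
      n - pdim Q ≤ m → g Q = 1 by
    intro Q hQ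
    exact hkey n Q hQ (by omega)
  intro m
  induction m with
  | zero =>
    intro Q hQ hm
    obtain ⟨B, hB, rfl⟩ := (mem_faces_iff hV).1 hQ
    rw [pdim_hull] at hm
    have h2 : fdim B ≤ n := fdim_le_n B
    rw [expo_eq_V_of_fdim hV hspan hB (by omega)]
    exact hg.1
  | succ m ih =>
    intro Q hQ hm
    obtain ⟨B, hB, rfl⟩ := (mem_faces_iff hV).1 hQ
    by_cases hBV : B = V
    · rw [hBV]; exact hg.1
    rw [pdim_hull] at hm
    have hBssV : B ⊂ V := Finset.ssubset_iff_subset_ne.2 ⟨expo_subset hB, hBV⟩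
    have hQP : convexHull ℝ (B : Set (E n)) ≠ convexHull ℝ (V : Set (E n)) :=
      fun h => hBV (hull_inj hV hB (expo_self V) h)
    have hkn : fdim B < n := by
      have h := fdim_lt hB (expo_self V) hBssV
      rwa [fdim_V hspan] at h
    obtain ⟨v, hvB, hvE⟩ := vertex_exists hV hB
    have hsimpv := hsimp v hvE
    have hrec := hg.2 (convexHull ℝ (B : Set (E n))) hQ hQP
    simp only at hrec
    set cands : Finset (Finset (E n)) :=
      V.powerset.filter (fun B' => Expo V B' ∧ B ⊂ B') with hcandsdef
    have hmemcands : ∀ {C : Finset (E n)}, C ∈ cands ↔ Expo V C ∧ B ⊂ C := by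
      intro C
      simp only [hcandsdef, Finset.mem_filter, Finset.mem_powerset]
      exact ⟨fun h => h.2, fun h => ⟨expo_subset h.1, h⟩⟩
    have hset : {R : Set (E n) | IsFace (convexHull ℝ (V : Set (E n))) R ∧
          convexHull ℝ (B : Set (E n)) ⊂ R}
        = (fun C : Finset (E n) => convexHull ℝ (C : Set (E n))) '' ↑cands := by
      ext R
      simp only [Set.mem_setOf_eq, Set.mem_image, Finset.mem_coe]
      constructor
      · rintro ⟨hRf, hRss⟩
        have hRne : R.Nonempty := (hull_nonempty hV hB).mono hRss.subset
        obtain ⟨C, hCexpo, rfl⟩ := (mem_faces_iff hV).1 ⟨hRf, hRne⟩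
        refine ⟨C, hmemcands.2 ⟨hCexpo, ?_⟩, rfl⟩
        constructor
        · exact (hull_subset_iff hV hB hCexpo).1 hRss.subset
        · intro h
          exact hRss.ne (le_antisymm hRss.subset ((hull_subset_iff hV hCexpo hB).2 h))
      · rintro ⟨C, hC, rfl⟩
        obtain ⟨hCexpo, hBC⟩ := hmemcands.1 hC
        refine ⟨((mem_faces_iff hV).2 ⟨C, hCexpo, rfl⟩).1, ?_⟩
        rw [Set.ssubset_def]
        constructor
        · exact (hull_subset_iff hV hB hCexpo).2 hBC.subset
        · intro h
          exact hBC.ne (hull_inj hV hB hCexpo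
            (le_antisymm ((hull_subset_iff hV hB hCexpo).2 hBC.subset) h))
    rw [hset] at hrec
    have hinj : Set.InjOn (fun C : Finset (E n) => convexHull ℝ (C : Set (E n))) ↑cands := by
      intro C1 h1 C2 h2 heq
      exact hull_inj hV (hmemcands.1 (Finset.mem_coe.1 h1)).1
        (hmemcands.1 (Finset.mem_coe.1 h2)).1 heq
    rw [finsum_mem_image hinj, finsum_mem_coe_finset] at hrec
    have hgc : ∀ C ∈ cands,
        g (convexHull ℝ (C : Set (E n))) * (Polynomial.X - 1) ^
            (pdim (convexHull ℝ (C : Set (E n))) - pdim (convexHull ℝ (B : Set (E n))) - 1)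
          = (Polynomial.X - 1) ^ (fdim C - fdim B - 1) := by
      intro C hC
      obtain ⟨hCexpo, hBC⟩ := hmemcands.1 hC
      have hCface : convexHull ℝ (C : Set (E n)) ∈ faces (convexHull ℝ (V : Set (E n))) :=
        (mem_faces_iff hV).2 ⟨C, hCexpo, rfl⟩
      have hClt : fdim B < fdim C := fdim_lt hB hCexpo hBC
      have hCle : fdim C ≤ n := fdim_le_n C
      have hgC : g (convexHull ℝ (C : Set (E n))) = 1 := by
        apply ih _ hCface
        rw [pdim_hull]
        omega
      rw [hgC, one_mul, pdim_hull, pdim_hull]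
    rw [Finset.sum_congr rfl hgc] at hrec
    have hgrB : (Sv V v B).card = n - fdim B :=
      grade hn hV hspan hsimpv hvE hB hvB
    have hbij : ∑ C ∈ cands, ((Polynomial.X : Polynomial ℤ) - 1) ^ (fdim C - fdim B - 1)
        = ∑ T ∈ (Sv V v B).powerset.erase (Sv V v B),
            ((Polynomial.X : Polynomial ℤ) - 1) ^ ((Sv V v B).card - T.card - 1) := by
      apply Finset.sum_bij (i := fun C _ => Sv V v C)
      · intro C hC
        obtain ⟨hCexpo, hBC⟩ := hmemcands.1 hC
        have hvC : v ∈ C := hBC.subset hvB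
        rw [Finset.mem_erase, Finset.mem_powerset]
        refine ⟨fun h => hBC.ne (Sv_inj hV hspan hCexpo hB hvC hvB h).symm, Sv_anti hBC.subset⟩
      · intro C1 h1 C2 h2 heq
        obtain ⟨hC1expo, hBC1⟩ := hmemcands.1 h1
        obtain ⟨hC2expo, hBC2⟩ := hmemcands.1 h2
        exact Sv_inj hV hspan hC1expo hC2expo (hBC1.subset hvB) (hBC2.subset hvB) heq
      · intro T hT
        rw [Finset.mem_erase, Finset.mem_powerset] at hT
        obtain ⟨hTne, hTsub⟩ := hT
        obtain ⟨B', hB'expo, hBB', hvB', hSvB'⟩ :=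
          Sv_surj hn hV hspan hsimpv hvE hB hvB T hTsub
        have hBne : B ≠ B' := fun h => hTne (by rw [← hSvB', ← h])
        exact ⟨B', hmemcands.2 ⟨hB'expo, Finset.ssubset_iff_subset_ne.2 ⟨hBB', hBne⟩⟩, hSvB'⟩
      · intro C hC
        obtain ⟨hCexpo, hBC⟩ := hmemcands.1 hC
        have hvC : v ∈ C := hBC.subset hvB
        have hgrC : (Sv V v C).card = n - fdim C :=
          grade hn hV hspan hsimpv hvE hCexpo hvC
        have hClt : fdim B < fdim C := fdim_lt hB hCexpo hBC
        have hCle : fdim C ≤ n := fdim_le_n C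
        congr 1
        omega
    rw [hbij, sum_powerset_poly] at hrec
    have he1 : n - 1 - fdim B = (Sv V v B).card - 1 := by omega
    rw [hrec, pdim_hull, he1]
    exact final_eval (Sv V v B).card (((Sv V v B).card - 1) / 2) (by omega)
      (Nat.div_le_self _ _)

end GWT


/-- **Triviality of Stanley's g-weights for simple polytopes.**
If `P` is simple, then `g̃_Q(t) = 1` for every nonempty face `Q` of `P`. -/
theorem g_weights_trivial_of_simple (n : ℕ) (hn : 1 ≤ n) (P : Set (Fin n → ℝ))
    (hP : IsFullLatticePolytope n P) (hs : IsSimple n P)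
    (g : Set (Fin n → ℝ) → Polynomial ℤ) (hg : gRecursion n P g) :
    ∀ Q ∈ faces P, g Q = 1 :=
  GWT.main n hn P hP hs g hg
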